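/- Let f be convex on W = conv(S) with curvature at most M. Suppose w ∈ W, η ∈ (0,1], and d ∈ S satisfy f((1-η)w + ηd) ≤ min_{d'∈S} f((1-η)w + ηd') + ηε. Then ⟨∇f(w), d⟩ ≤ min_{d'∈S} ⟨∇f(w), d'⟩ + ε + (M/2)η. -/

import Mathlib

open RealInnerProductSpace Topology Filter


lemma grad_lower_bound {n : ℕ} {W : Set (EuclideanSpace ℝ (Fin n))}
    (hWc : Convex ℝ W) {f : EuclideanSpace ℝ (Fin n) → ℝ}
    (hf : ConvexOn ℝ W f) {w y G : EuclideanSpace ℝ (Fin n)}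
    (hw : w ∈ W) (hy : y ∈ W) (hG : HasGradientAt f G w) :
    f w + ⟪G, y - w⟫ ≤ f y := by
  set γ : ℝ → EuclideanSpace ℝ (Fin n) := fun t => w + t • (y - w) with hγ
  have hγd : HasDerivAt γ (y - w) 0 := by
    simpa [hγ] using ((hasDerivAt_id (0:ℝ)).smul_const (y - w)).const_add w
  have hφ : HasDerivAt (f ∘ γ) ⟪G, y - w⟫ 0 := by
    have h0 : γ 0 = w := by simp [hγ]
    have := (h0 ▸ hG : HasGradientAt f G (γ 0))
    have := this.hasFDerivAt.comp_hasDerivAt 0 hγd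
    simpa using this
  have hslope : Filter.Tendsto (slope (f ∘ γ) 0) (𝓝[>] 0) (𝓝 ⟪G, y - w⟫) :=
    (hasDerivAt_iff_tendsto_slope.mp hφ).mono_left
      (nhdsWithin_mono 0 (fun t ht => ne_of_gt ht))
  have hle : ⟪G, y - w⟫ ≤ f y - f w := by
    refine le_of_tendsto hslope ?_
    filter_upwards [Ioo_mem_nhdsGT_of_mem (by norm_num : (0:ℝ) ∈ Set.Ico 0 1)] with t ht
    have ht0 : 0 < t := ht.1
    have ht1 : t ≤ 1 := le_of_lt ht.2
    have hmem : γ t = (1 - t) • w + t • y := by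
      simp [hγ, smul_sub, sub_smul]; abel
    have hcx : f ((1 - t) • w + t • y) ≤ (1 - t) * f w + t * f y :=
      hf.2 hw hy (by linarith) (le_of_lt ht0) (by ring)
    rw [slope_def_field]
    have : f (γ t) - f (γ 0) ≤ t * (f y - f w) := by
      rw [hmem]; simp [hγ]; nlinarith [hcx]
    rw [sub_zero, div_le_iff₀ ht0, mul_comm]
    simpa [Function.comp] using this
  linarith


theorem stmt_8 (n : ℕ) (M ε : ℝ) (hε : 0 ≤ ε)
    (S : Set (EuclideanSpace ℝ (Fin n))) (hS : IsCompact S)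
    (W : Set (EuclideanSpace ℝ (Fin n))) (hW : W = convexHull ℝ S)
    (f : EuclideanSpace ℝ (Fin n) → ℝ) (g : EuclideanSpace ℝ (Fin n) → EuclideanSpace ℝ (Fin n))
    (hf : ConvexOn ℝ W f)
    (hg : ∀ x ∈ W, HasGradientAt f (g x) x)
    (hcurv : ∀ w ∈ W, ∀ d ∈ S, ∀ η ∈ Set.Icc (0 : ℝ) 1,
      f ((1 - η) • w + η • d) ≤ f w + η * ⟪g w, d - w⟫ + (M / 2) * η ^ 2)
    (w d : EuclideanSpace ℝ (Fin n)) (hw : w ∈ W) (hd : d ∈ S)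
    (η : ℝ) (hη : η ∈ Set.Ioc (0 : ℝ) 1)
    (happrox : ∀ d' ∈ S, f ((1 - η) • w + η • d) ≤ f ((1 - η) • w + η • d') + η * ε) :
    ∀ d' ∈ S, ⟪g w, d⟫ ≤ ⟪g w, d'⟫ + ε + (M / 2) * η := by
  intro d' hd'
  have hWc : Convex ℝ W := hW ▸ convex_convexHull ℝ S
  have hSW : S ⊆ W := hW ▸ subset_convexHull ℝ S
  have hη0 := hη.1
  have hη1 := hη.2
  have hyW : (1 - η) • w + η • d ∈ W :=
    hWc hw (hSW hd) (by linarith) (le_of_lt hη0) (by ring)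
  have hlow : f w + ⟪g w, ((1 - η) • w + η • d) - w⟫ ≤ f ((1 - η) • w + η • d) :=
    grad_lower_bound hWc hf hw hyW (hg w hw)
  have hsub : ((1 - η) • w + η • d) - w = η • (d - w) := by
    simp [smul_sub, sub_smul]; abel
  rw [hsub, real_inner_smul_right] at hlow
  have hc : f ((1 - η) • w + η • d') ≤ f w + η * ⟪g w, d' - w⟫ + (M / 2) * η ^ 2 :=
    hcurv w hw d' hd' η ⟨le_of_lt hη0, hη1⟩
  have ha := happrox d' hd'
  have key : η * ⟪g w, d - w⟫ ≤ η * ⟪g w, d' - w⟫ + (M / 2) * η ^ 2 + η * ε := by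
    linarith
  have : ⟪g w, d - w⟫ ≤ ⟪g w, d' - w⟫ + (M / 2) * η + ε := by
    rw [← mul_le_mul_iff_right₀ hη0]; nlinarith [key]
  simp only [inner_sub_right] at this
  linarith
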